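/- For every positive integer s, d₄(21s, 3) = 16s − 1; that is, there exists a quaternary Hermitian LCD [21s, 3] code with minimum weight 16s−1, and every quaternary Hermitian LCD [21s, 3] code has minimum weight at most 16s−1. -/

import Mathlib

open scoped Classical

noncomputable section

/-- The finite field with four elements. -/
abbrev F4 := GaloisField 2 2

/-- The (Hamming) weight of a vector over `F4`: the number of nonzero coordinates. -/
def wt {n : ℕ} (x : Fin n → F4) : ℕ :=
  (Finset.univ.filter (fun i => x i ≠ 0)).card

/-- Hermitian inner product on `F4^n`: `∑ i, x i * (conj (y i))` with `conj z = z^2`. -/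
def hermInner {n : ℕ} (x y : Fin n → F4) : F4 :=
  ∑ i, x i * (y i) ^ 2

/-- Membership in the Hermitian dual `C^{⊥H}` of a code `C`. -/
def inHermDual {n : ℕ} (C : Submodule F4 (Fin n → F4)) (x : Fin n → F4) : Prop :=
  ∀ y ∈ C, hermInner x y = 0

/-- `C` is Hermitian LCD: `C ∩ C^{⊥H} = {0}`. -/
def IsHermLCD {n : ℕ} (C : Submodule F4 (Fin n → F4)) : Prop :=
  ∀ x ∈ C, inHermDual C x → x = 0

/-- `C` has minimum weight (exactly) `d`. -/
def minWtIs {n : ℕ} (C : Submodule F4 (Fin n → F4)) (d : ℕ) : Prop :=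
  (∃ x ∈ C, x ≠ 0 ∧ wt x = d) ∧ ∀ x ∈ C, x ≠ 0 → d ≤ wt x

/-- `C` is a quaternary Hermitian LCD `[n,k,d]` code. -/
def IsHermLCDCode (n k d : ℕ) (C : Submodule F4 (Fin n → F4)) : Prop :=
  Module.finrank F4 C = k ∧ IsHermLCD C ∧ minWtIs C d

/-- `d₄(n,k) = d`: the largest minimum weight among quaternary Hermitian LCD `[n,k]` codes
is `d`. -/
def d4Is (n k d : ℕ) : Prop :=
  (∃ C : Submodule F4 (Fin n → F4), IsHermLCDCode n k d C) ∧
  (∀ C : Submodule F4 (Fin n → F4), Module.finrank F4 C = k → IsHermLCD C →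
    ∃ x ∈ C, x ≠ 0 ∧ wt x ≤ d)

end


noncomputable section

open Finset

instance instFintypeF4 : Fintype F4 := Fintype.ofFinite F4

namespace S16

lemma F4card : Fintype.card F4 = 4 := by simpa using GaloisField.card 2 2 (by norm_num)

lemma two_zero : (2 : F4) = 0 := by
  have : CharP F4 2 := inferInstance
  exact mod_cast CharP.cast_eq_zero F4 2

lemma add_self (a : F4) : a + a = 0 := by
  have : a + a = 2 * a := by ring
  rw [this, two_zero, zero_mul]

lemma cube_one {a : F4} (h : a ≠ 0) : a ^ 3 = 1 := by
  have hc := FiniteField.pow_card_sub_one_eq_one a h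
  rwa [F4card] at hc

abbrev V3 := Fin 3 → F4

def dot (x v : V3) : F4 := ∑ j, x j * v j

lemma dot_zero_left (v : V3) : dot 0 v = 0 := by simp [dot]

lemma dot_zero_right (a : V3) : dot a 0 = 0 := by simp [dot]

lemma dot_smul_right (a : V3) (c : F4) (v : V3) : dot a (c • v) = c * dot a v := by
  unfold dot
  rw [Finset.mul_sum]
  refine Finset.sum_congr rfl fun j _ => ?_
  simp [Pi.smul_apply, smul_eq_mul]; ring

lemma dot_add_right (a u v : V3) : dot a (u + v) = dot a u + dot a v := by
  simp [dot, mul_add, Finset.sum_add_distrib]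

lemma dot_single (j : Fin 3) (c : F4) (v : V3) : dot (Pi.single j c) v = c * v j := by
  rw [dot]
  rw [Finset.sum_eq_single j]
  · simp
  · intro k _ hk; simp [Pi.single_eq_of_ne hk]
  · simp

/-- `dot` as a linear map in the first argument. -/
def ell (y : V3) : V3 →ₗ[F4] F4 where
  toFun a := dot a y
  map_add' a b := by simp [dot, add_mul, Finset.sum_add_distrib]
  map_smul' c a := by simp [dot, Finset.mul_sum, mul_assoc]

@[simp] lemma ell_apply (y a : V3) : ell y a = dot a y := rfl

set_option linter.unusedSectionVars false
section fibers

variable {A B : Type*} [Fintype A] [Fintype B] [AddCommGroup A] [AddCommGroup B]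
  [Module F4 A] [Module F4 B]

lemma fiber_card_eq (f : A →ₗ[F4] B) {t u : B} (ht : ∃ a, f a = t) (hu : ∃ a, f a = u) :
    (univ.filter (fun a => f a = t)).card = (univ.filter (fun a => f a = u)).card := by
  obtain ⟨x, hx⟩ := ht
  obtain ⟨y, hy⟩ := hu
  apply Finset.card_nbij' (fun a => a - x + y) (fun a => a - y + x)
  · intro a ha
    simp only [Finset.mem_coe, mem_filter, mem_univ, true_and] at ha ⊢
    simp [map_add, map_sub, ha, hx, hy]
  · intro a ha
    simp only [Finset.mem_coe, mem_filter, mem_univ, true_and] at ha ⊢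
    simp [map_add, map_sub, ha, hx, hy]
  · intro a _; simp
  · intro a _; simp

lemma card_fiber_mul (f : A →ₗ[F4] B) (hf : Function.Surjective f) (t : B) :
    (univ.filter (fun a => f a = t)).card * Fintype.card B = Fintype.card A := by
  have h1 : (univ : Finset A).card = ∑ b : B, (univ.filter (fun a => f a = b)).card :=
    Finset.card_eq_sum_card_fiberwise (fun a _ => Finset.mem_univ (f a))
  have h2 : ∀ b : B, (univ.filter (fun a => f a = b)).card
      = (univ.filter (fun a => f a = t)).card := by
    intro b; exact fiber_card_eq f (hf b) (hf t)
  rw [Finset.card_univ] at h1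
  rw [h1, Finset.sum_congr rfl (fun b _ => h2 b), Finset.sum_const, Finset.card_univ,
    smul_eq_mul, mul_comm]

end fibers

lemma cardV3 : Fintype.card V3 = 64 := by
  rw [Fintype.card_fun, F4card]; rfl

lemma cardF42 : Fintype.card (F4 × F4) = 16 := by
  rw [Fintype.card_prod, F4card]

/-- L1: the kernel of a nonzero functional has 16 elements. -/
lemma L1 {y : V3} (hy : y ≠ 0) :
    (univ.filter (fun a : V3 => dot a y = 0)).card = 16 := by
  obtain ⟨j, hj⟩ := Function.ne_iff.mp hy
  have hj' : y j ≠ 0 := by simpa using hj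
  have hsurj : Function.Surjective (ell y) := by
    intro t
    refine ⟨Pi.single j (t * (y j)⁻¹), ?_⟩
    rw [ell_apply, dot_single]
    field_simp
  have := card_fiber_mul (ell y) hsurj 0
  rw [F4card, cardV3] at this
  simp only [ell_apply] at this
  convert Nat.eq_of_mul_eq_mul_right (by norm_num : 0 < 4) (this.trans (by norm_num : (64:ℕ) = 16*4))
  ext a
  exact ⟨fun h => Finset.mem_filter.mpr ⟨Finset.mem_univ _, (Finset.mem_filter.mp h).2⟩,
    fun h => Finset.mem_filter.mpr ⟨Finset.mem_univ _, (Finset.mem_filter.mp h).2⟩⟩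


lemma dot_comm (x v : V3) : dot x v = dot v x :=
  Finset.sum_congr rfl fun j _ => mul_comm _ _

set_option linter.unusedSectionVars false in
lemma card_fiber_mul' {A B : Type*} [Fintype A] [Fintype B] [AddCommGroup A] [AddCommGroup B]
    [Module F4 A] [Module F4 B] (f : A →ₗ[F4] B) (hf : Function.Surjective f) (t : B)
    (p : A → Prop) [DecidablePred p] (hp : ∀ a, p a ↔ f a = t) :
    (univ.filter p).card * Fintype.card B = Fintype.card A := by
  have hset : univ.filter p = univ.filter (fun a => f a = t) := by
    ext a
    simp [hp a]
  rw [hset]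
  exact card_fiber_mul f hf t

/-- If the kernel of `ell y` is contained in the kernel of `ell v`, then `v` is a
multiple of `y`. -/
lemma prop_of_ker_le {y v : V3} (hy : y ≠ 0)
    (h : ∀ a : V3, dot a y = 0 → dot a v = 0) : ∃ c : F4, v = c • y := by
  obtain ⟨j, hj⟩ := Function.ne_iff.mp hy
  have hj' : y j ≠ 0 := by simpa using hj
  refine ⟨v j * (y j)⁻¹, ?_⟩
  have key : ∀ a : V3, dot a v = v j * (y j)⁻¹ * dot a y := by
    intro a
    set w : V3 := Pi.single j (1 : F4) with hw
    set c1 : F4 := dot a y * (y j)⁻¹ with hc1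
    have h1 : dot (a - c1 • w) y = 0 := by
      have heq : dot (a - c1 • w) y = dot a y - c1 * dot w y := by
        have := (ell y).map_sub a (c1 • w)
        simpa [map_smul, smul_eq_mul] using this
      rw [heq, hw, dot_single, hc1]
      field_simp
      ring
    have h2 := h _ h1
    have h3 : dot (a - c1 • w) v = dot a v - c1 * dot w v := by
      have := (ell v).map_sub a (c1 • w)
      simpa [map_smul, smul_eq_mul] using this
    rw [h3, hw, dot_single] at h2
    have h4 := sub_eq_zero.mp h2
    rw [h4, hc1]; ring
  funext i
  have := key (Pi.single i 1)
  rw [dot_single, dot_single] at this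
  simp only [one_mul] at this
  simpa [Pi.smul_apply, smul_eq_mul, mul_comm] using this

/-- L2: two independent functionals cut out a subspace with 4 elements. -/
lemma L2 {y v : V3} (hy : y ≠ 0) (hv : v ≠ 0) (hind : ∀ c : F4, v ≠ c • y) :
    (univ.filter (fun a : V3 => dot a y = 0 ∧ dot a v = 0)).card = 4 := by
  -- the joint map is surjective
  set f : V3 →ₗ[F4] F4 × F4 := (ell y).prod (ell v) with hf
  have hyv : ∀ c : F4, y ≠ c • v := by
    intro c hc
    have hc0 : c ≠ 0 := by rintro rfl; simp at hc; exact hy hc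
    exact hind c⁻¹ (by rw [hc, smul_smul, inv_mul_cancel₀ hc0, one_smul])
  have ex1 : ∃ a : V3, dot a y = 0 ∧ dot a v ≠ 0 := by
    by_contra hcon
    push_neg at hcon
    obtain ⟨c, hc⟩ := prop_of_ker_le hy (fun a ha => hcon a ha)
    exact hind c hc
  have ex2 : ∃ a : V3, dot a v = 0 ∧ dot a y ≠ 0 := by
    by_contra hcon
    push_neg at hcon
    obtain ⟨c, hc⟩ := prop_of_ker_le hv (fun a ha => hcon a ha)
    exact hyv c hc
  have hsurj : Function.Surjective f := by
    rintro ⟨t, u⟩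
    obtain ⟨a1, ha1y, ha1v⟩ := ex1
    obtain ⟨a2, ha2v, ha2y⟩ := ex2
    refine ⟨(u * (dot a1 v)⁻¹) • a1 + (t * (dot a2 y)⁻¹) • a2, ?_⟩
    have : ∀ b : V3, f b = (dot b y, dot b v) := fun b => rfl
    rw [map_add, map_smul, map_smul, this a1, this a2]
    simp only [Prod.smul_mk, Prod.mk_add_mk, smul_eq_mul]
    rw [ha1y, ha2v]
    field_simp
    simp [ha1v, ha2y]
  have key := card_fiber_mul' f hsurj 0
    (fun a : V3 => dot a y = 0 ∧ dot a v = 0)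
    (fun a => by simp [hf, LinearMap.prod_apply, Prod.ext_iff])
  rw [cardF42, cardV3] at key
  exact Nat.eq_of_mul_eq_mul_right (by norm_num) (key.trans (by norm_num : (64:ℕ) = 4 * 16))

/-- The basic character sum: `∑ v, v j * (v k)^2 = 0`. -/
lemma S0 (j k : Fin 3) : ∑ v : V3, v j * (v k) ^ 2 = 0 := by
  have evsmul : ∀ (n : ℕ) (x : F4), Even n → n • x = 0 := by
    rintro n x ⟨m, rfl⟩
    rw [add_smul]; exact add_self _
  by_cases hjk : j = k
  · subst hjk
    rw [← Finset.sum_fiberwise (univ : Finset V3) (fun v => v j) (fun v => v j * (v j) ^ 2)]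
    refine Finset.sum_eq_zero fun t _ => ?_
    have hconst : ∀ v ∈ univ.filter (fun v : V3 => v j = t), v j * (v j) ^ 2 = t * t ^ 2 :=
      fun v hv => by rw [(Finset.mem_filter.mp hv).2]
    rw [(Finset.sum_congr rfl hconst).trans (Finset.sum_const _)]
    have hsurj : Function.Surjective (LinearMap.proj j : V3 →ₗ[F4] F4) := by
      intro c; exact ⟨Pi.single j c, by simp⟩
    have hcard := card_fiber_mul' (LinearMap.proj j : V3 →ₗ[F4] F4) hsurj t
      (fun v : V3 => v j = t) (fun v => by simp [LinearMap.proj_apply])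
    rw [F4card, cardV3] at hcard
    have hc16 : (univ.filter (fun v : V3 => v j = t)).card = 16 :=
      Nat.eq_of_mul_eq_mul_right (by norm_num) (hcard.trans (by norm_num : (64:ℕ) = 16 * 4))
    rw [hc16]
    exact evsmul 16 _ (by decide)
  · set f : V3 →ₗ[F4] F4 × F4 := (LinearMap.proj j).prod (LinearMap.proj k) with hfdef
    rw [← Finset.sum_fiberwise (univ : Finset V3) (fun v => (v j, v k))
      (fun v => v j * (v k) ^ 2)]
    refine Finset.sum_eq_zero fun t _ => ?_
    have hconst : ∀ v ∈ univ.filter (fun v : V3 => (v j, v k) = t),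
        v j * (v k) ^ 2 = t.1 * t.2 ^ 2 := by
      intro v hv
      have h2 := (Finset.mem_filter.mp hv).2
      rw [show v j = t.1 from by rw [← h2], show v k = t.2 from by rw [← h2]]
    rw [(Finset.sum_congr rfl hconst).trans (Finset.sum_const _)]
    have hsurj : Function.Surjective f := by
      rintro ⟨α, β⟩
      set w : V3 := Pi.single j α + Pi.single k β with hwdef
      refine ⟨w, ?_⟩
      have h1 : w j = α := by
        simp [hwdef, Pi.single_eq_of_ne hjk, Pi.single_eq_of_ne (Ne.symm hjk)]
      have h2 : w k = β := by
        simp [hwdef, Pi.single_eq_of_ne hjk, Pi.single_eq_of_ne (Ne.symm hjk)]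
      have : f w = (w j, w k) := rfl
      rw [this, h1, h2]
    have hcard := card_fiber_mul' f hsurj t
      (fun v : V3 => (v j, v k) = t) (fun v => by rfl)
    rw [cardF42, cardV3] at hcard
    have hc4 : (univ.filter (fun v : V3 => (v j, v k) = t)).card = 4 :=
      Nat.eq_of_mul_eq_mul_right (by norm_num) (hcard.trans (by norm_num : (64:ℕ) = 4 * 16))
    rw [hc4]
    exact evsmul 4 _ (by decide)

abbrev P21 := Unit ⊕ F4 ⊕ F4 × F4

lemma cardP21 : Fintype.card P21 = 21 := by
  simp [Fintype.card_sum, Fintype.card_prod, F4card]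

def pt : P21 → V3
  | Sum.inl _ => ![1, 0, 0]
  | Sum.inr (Sum.inl a) => ![a, 1, 0]
  | Sum.inr (Sum.inr (a, b)) => ![a, b, 1]

lemma pt_inl : pt (Sum.inl ()) = ![1, 0, 0] := rfl
lemma pt_inrl (a : F4) : pt (Sum.inr (Sum.inl a)) = ![a, 1, 0] := rfl
lemma pt_inrr (a b : F4) : pt (Sum.inr (Sum.inr (a, b))) = ![a, b, 1] := rfl

def lead (v : V3) : F4 := if v 2 ≠ 0 then v 2 else if v 1 ≠ 0 then v 1 else v 0

def pidx (v : V3) : P21 :=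
  if v 2 ≠ 0 then Sum.inr (Sum.inr (v 0 * (v 2)⁻¹, v 1 * (v 2)⁻¹))
  else if v 1 ≠ 0 then Sum.inr (Sum.inl (v 0 * (v 1)⁻¹))
  else Sum.inl ()

lemma pt_ne_zero (p : P21) : pt p ≠ 0 := by
  rcases p with _ | a | ⟨a, b⟩ <;>
  · intro h
    have := congrFun h
    first
    | exact (one_ne_zero : (1:F4) ≠ 0) (by simpa [pt] using this 0)
    | exact (one_ne_zero : (1:F4) ≠ 0) (by simpa [pt] using this 1)
    | exact (one_ne_zero : (1:F4) ≠ 0) (by simpa [pt] using this 2)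

lemma lead_spec {v : V3} (hv : v ≠ 0) : lead v ≠ 0 ∧ v = lead v • pt (pidx v) := by
  by_cases h2 : v 2 ≠ 0
  · refine ⟨by simpa [lead, h2] using h2, ?_⟩
    rw [lead, pidx, if_pos h2, if_pos h2, pt]
    funext j
    fin_cases j <;> simp [Matrix.cons_val_zero, Matrix.cons_val_one] <;> field_simp <;> ring
  · push_neg at h2
    have hn2 : ¬ (v 2 ≠ 0) := by simp [h2]
    by_cases h1 : v 1 ≠ 0
    · refine ⟨by simp [lead, h2, h1], ?_⟩
      rw [lead, pidx, if_neg hn2, if_neg hn2, if_pos h1, if_pos h1, pt]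
      funext j
      fin_cases j <;> simp [Matrix.cons_val_zero, Matrix.cons_val_one, h2] <;>
        field_simp <;> ring
    · push_neg at h1
      have hn1 : ¬ (v 1 ≠ 0) := by simp [h1]
      have h0 : v 0 ≠ 0 := by
        intro h0
        apply hv
        funext j
        fin_cases j <;> simp [h0, h1, h2]
      refine ⟨by simp [lead, h2, h1, h0], ?_⟩
      rw [lead, pidx, if_neg hn2, if_neg hn2, if_neg hn1, if_neg hn1, pt]
      funext j
      fin_cases j <;> simp [Matrix.cons_val_zero, Matrix.cons_val_one, h1, h2]

lemma pidx_smul_pt {c : F4} (hc : c ≠ 0) (p : P21) : pidx (c • pt p) = p := by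
  have hmul : ∀ x : F4, c * x * c⁻¹ = x := by
    intro x
    rw [mul_comm c x, mul_assoc, mul_inv_cancel₀ hc, mul_one]
  rcases p with _ | a | ⟨a, b⟩
  · have h2 : (c • pt (Sum.inl () : P21)) 2 = 0 := by simp [pt]
    have h1 : (c • pt (Sum.inl () : P21)) 1 = 0 := by simp [pt]
    have hn2 : ¬ ((c • pt (Sum.inl () : P21)) 2 ≠ 0) := by simp [h2]
    have hn1 : ¬ ((c • pt (Sum.inl () : P21)) 1 ≠ 0) := by simp [h1]
    rw [pidx, if_neg hn2, if_neg hn1]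
  · have h2 : (c • pt (Sum.inr (Sum.inl a) : P21)) 2 = 0 := by simp [pt]
    have h1 : (c • pt (Sum.inr (Sum.inl a) : P21)) 1 = c := by simp [pt]
    have h0 : (c • pt (Sum.inr (Sum.inl a) : P21)) 0 = c * a := by simp [pt]
    have hn2 : ¬ ((c • pt (Sum.inr (Sum.inl a) : P21)) 2 ≠ 0) := by simp [h2]
    rw [pidx, if_neg hn2, if_pos (by rw [h1]; exact hc), h0, h1, hmul a]
  · have h2 : (c • pt (Sum.inr (Sum.inr (a, b)) : P21)) 2 = c := by simp [pt]
    have h0 : (c • pt (Sum.inr (Sum.inr (a, b)) : P21)) 0 = c * a := by simp [pt]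
    have h1 : (c • pt (Sum.inr (Sum.inr (a, b)) : P21)) 1 = c * b := by simp [pt]
    rw [pidx, if_pos (by rw [h2]; exact hc), h0, h1, h2, hmul a, hmul b]

/-- The fiber of `pidx` over `p` (among nonzero vectors) has exactly 3 elements. -/
lemma pidx_fiber_card (p : P21) :
    (univ.filter (fun v : V3 => v ≠ 0 ∧ pidx v = p)).card = 3 := by
  have hbij : (univ.filter (fun v : V3 => v ≠ 0 ∧ pidx v = p)).card
      = ((univ : Finset F4).erase 0).card := by
    apply Finset.card_nbij' (fun v => lead v) (fun c => c • pt p)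
    · intro v hv
      rw [Finset.mem_coe, Finset.mem_filter] at hv
      obtain ⟨-, hv0, -⟩ := hv
      simp [Finset.mem_erase, (lead_spec hv0).1]
    · intro c hc
      rw [Finset.mem_coe, Finset.mem_erase] at hc
      rw [Finset.mem_coe, Finset.mem_filter]
      refine ⟨Finset.mem_univ _, smul_ne_zero hc.1 (pt_ne_zero p), pidx_smul_pt hc.1 p⟩
    · intro v hv
      rw [Finset.mem_coe, Finset.mem_filter] at hv
      obtain ⟨-, hv0, hvp⟩ := hv
      rw [← hvp]
      exact ((lead_spec hv0).2).symm
    · intro c hc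
      rw [Finset.mem_coe, Finset.mem_erase] at hc
      -- lead (c • pt p) = c
      have h1 : c • pt p ≠ 0 := smul_ne_zero hc.1 (pt_ne_zero p)
      have h2 := (lead_spec h1).2
      rw [pidx_smul_pt hc.1 p] at h2
      -- c • pt p = lead (c • pt p) • pt p
      have h3 : (c - lead (c • pt p)) • pt p = 0 := by
        rw [sub_smul, ← h2]; abel
      rcases smul_eq_zero.mp h3 with h4 | h4
      · exact (sub_eq_zero.mp h4).symm
      · exact absurd h4 (pt_ne_zero p)
  rw [hbij, Finset.card_erase_of_mem (Finset.mem_univ _), Finset.card_univ, F4card]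

lemma three_smul_eq (x : F4) : (3 : ℕ) • x = x := by
  have : (3 : ℕ) • x = x + (x + x) := by
    rw [show (3:ℕ) = 1 + 2 from rfl, add_smul, one_smul, two_smul]
  rw [this, add_self, add_zero]

/-- Summing an `F4ˣ`-invariant function over the transversal equals summing it over
all nonzero vectors. -/
lemma ptsum (F : V3 → F4) (hF : ∀ (c : F4), c ≠ 0 → ∀ v, F (c • v) = F v) :
    ∑ p : P21, F (pt p) = ∑ v ∈ univ.filter (fun v : V3 => v ≠ 0), F v := by
  rw [← Finset.sum_fiberwise (univ.filter (fun v : V3 => v ≠ 0)) pidx F]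
  refine Finset.sum_congr rfl fun p _ => ?_
  have hconst : ∀ v ∈ (univ.filter (fun v : V3 => v ≠ 0)).filter (fun v => pidx v = p),
      F v = F (pt p) := by
    intro v hv
    rw [Finset.mem_filter, Finset.mem_filter] at hv
    obtain ⟨⟨-, hv0⟩, hvp⟩ := hv
    obtain ⟨hl, hrep⟩ := lead_spec hv0
    conv_lhs => rw [hrep, hvp]
    exact hF _ hl _
  rw [Finset.sum_congr rfl hconst, Finset.sum_const]
  have hcard : ((univ.filter (fun v : V3 => v ≠ 0)).filter (fun v => pidx v = p)).card = 3 := by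
    rw [Finset.filter_filter]
    exact pidx_fiber_card p
  rw [hcard, three_smul_eq]

/-- If `F` is invariant and kills `0`, and sums to zero over the whole space,
then for columns with constant fiber multiplicities the column sum vanishes. -/
lemma colsum_eq_zero {n : ℕ} (g : Fin n → V3) (m : ℕ) (hg : ∀ i, g i ≠ 0)
    (hM : ∀ p : P21, (univ.filter (fun i => pidx (g i) = p)).card = m)
    (F : V3 → F4) (hF : ∀ (c : F4), c ≠ 0 → ∀ v, F (c • v) = F v)
    (hzero : ∑ v : V3, F v = 0) (hF0 : F 0 = 0) :
    ∑ i, F (g i) = 0 := by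
  have hnz : ∑ v ∈ univ.filter (fun v : V3 => v ≠ 0), F v = 0 := by
    have hsplit := Finset.sum_filter_add_sum_filter_not (univ : Finset V3)
      (fun v => v ≠ 0) F
    have hz : ∑ v ∈ univ.filter (fun v : V3 => ¬ v ≠ 0), F v = 0 := by
      have : univ.filter (fun v : V3 => ¬ v ≠ 0) = {0} := by
        ext v; simp
      rw [this, Finset.sum_singleton, hF0]
    rw [hz, add_zero] at hsplit
    rw [hsplit, hzero]
  have hstep : ∀ i : Fin n, F (g i) = F (pt (pidx (g i))) := by
    intro i
    obtain ⟨hl, hrep⟩ := lead_spec (hg i)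
    conv_lhs => rw [hrep]
    exact hF _ hl _
  rw [Finset.sum_congr rfl (fun i _ => hstep i)]
  rw [← Finset.sum_fiberwise (univ : Finset (Fin n)) (fun i => pidx (g i))
    (fun i => F (pt (pidx (g i))))]
  have hterm : ∀ p : P21, ∑ i ∈ univ.filter (fun i => pidx (g i) = p),
      F (pt (pidx (g i))) = m • F (pt p) := by
    intro p
    have hconst : ∀ i ∈ univ.filter (fun i : Fin n => pidx (g i) = p),
        F (pt (pidx (g i))) = F (pt p) := by
      intro i hi
      rw [(Finset.mem_filter.mp hi).2]
    rw [Finset.sum_congr rfl hconst, Finset.sum_const, hM p]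
  rw [Finset.sum_congr rfl (fun p _ => hterm p), ← Finset.smul_sum, ptsum F hF, hnz, smul_zero]

/-- The invariance of the Hermitian summand. -/
lemma Fdot_inv (a b : V3) : ∀ (c : F4), c ≠ 0 → ∀ v : V3,
    dot a (c • v) * (dot b (c • v)) ^ 2 = dot a v * (dot b v) ^ 2 := by
  intro c hc v
  rw [dot_smul_right, dot_smul_right, mul_pow]
  have : c * dot a v * (c ^ 2 * (dot b v) ^ 2) = c ^ 3 * (dot a v * (dot b v) ^ 2) := by ring
  rw [this, cube_one hc, one_mul]

/-- The total character sum vanishes. -/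
lemma Fsum_zero (a b : V3) : ∑ v : V3, dot a v * (dot b v) ^ 2 = 0 := by
  have hexp : ∀ v : V3, dot a v * (dot b v) ^ 2
      = ∑ j : Fin 3, ∑ k : Fin 3, a j * b k ^ 2 * (v j * v k ^ 2) := by
    intro v
    rw [dot, dot, sum_pow_char (p := 2) univ (fun k => b k * v k), Finset.sum_mul]
    refine Finset.sum_congr rfl fun j _ => ?_
    rw [Finset.mul_sum]
    refine Finset.sum_congr rfl fun k _ => ?_
    rw [mul_pow]; ring
  rw [Finset.sum_congr rfl (fun v _ => hexp v), Finset.sum_comm]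
  refine Finset.sum_eq_zero fun j _ => ?_
  rw [Finset.sum_comm]
  refine Finset.sum_eq_zero fun k _ => ?_
  rw [← Finset.mul_sum, S0, mul_zero]

/-- force equality from a sum bounded above termwise and below globally -/
lemma force_eq {α : Type*} {S : Finset α} {f : α → ℕ} {c : ℕ}
    (hle : ∀ a ∈ S, f a ≤ c) (hsum : S.card * c ≤ ∑ a ∈ S, f a) :
    ∀ a ∈ S, f a = c := by
  intro a ha
  by_contra hne
  have hlt : f a < c := lt_of_le_of_ne (hle a ha) hne
  have h1 : ∑ x ∈ S, f x < ∑ x ∈ S, c := Finset.sum_lt_sum hle ⟨a, ha, hlt⟩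
  rw [Finset.sum_const, smul_eq_mul] at h1
  omega

lemma force_eq' {α : Type*} {S : Finset α} {f : α → ℕ} {c : ℕ}
    (hge : ∀ a ∈ S, c ≤ f a) (hsum : ∑ a ∈ S, f a ≤ S.card * c) :
    ∀ a ∈ S, f a = c := by
  intro a ha
  by_contra hne
  have hlt : c < f a := lt_of_le_of_ne (hge a ha) (Ne.symm hne)
  have h1 : ∑ x ∈ S, (c : ℕ) < ∑ x ∈ S, f x := Finset.sum_lt_sum hge ⟨a, ha, hlt⟩
  rw [Finset.sum_const, smul_eq_mul] at h1
  omega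

lemma converse (s : ℕ) (hs : 1 ≤ s) (C : Submodule F4 (Fin (21*s) → F4))
    (h3 : Module.finrank F4 C = 3) (hlcd : IsHermLCD C) :
    ∃ x ∈ C, x ≠ 0 ∧ wt x ≤ 16*s - 1 := by
  by_contra hcon
  push_neg at hcon
  classical
  -- set up a basis and the column vectors
  have : Module.Finite F4 C := inferInstance
  let b : Module.Basis (Fin 3) F4 C := Module.finBasisOfFinrankEq F4 C h3
  set g : Fin (21*s) → V3 := fun i j => ((b j : Fin (21*s) → F4) i) with hgdef
  set xa : V3 → (Fin (21*s) → F4) :=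
    fun a => (((∑ j, a j • b j : C) : Fin (21*s) → F4)) with hxadef
  have hxamem : ∀ a, xa a ∈ C := fun a => SetLike.coe_mem _
  have hcoord : ∀ a i, xa a i = dot a (g i) := by
    intro a i
    show ((∑ j, a j • b j : C) : Fin (21*s) → F4) i = dot a (g i)
    rw [dot, AddSubmonoidClass.coe_finset_sum, Finset.sum_apply]
    refine Finset.sum_congr rfl fun j _ => ?_
    show ((a j • b j : C) : Fin (21*s) → F4) i = a j * g i j
    rw [Submodule.coe_smul, Pi.smul_apply, smul_eq_mul]
  have hxane : ∀ a : V3, a ≠ 0 → xa a ≠ 0 := by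
    intro a ha hz
    have h0 : (∑ j, a j • b j : C) = 0 := by
      apply Subtype.ext
      rw [Submodule.coe_zero]
      exact hz
    have hli := b.linearIndependent
    have := Fintype.linearIndependent_iff.mp hli a h0
    exact ha (funext this)
  -- weights
  set Z : V3 → ℕ := fun a => (univ.filter (fun i => dot a (g i) = 0)).card with hZdef
  have hwtZ : ∀ a, wt (xa a) + Z a = 21*s := by
    intro a
    rw [hZdef, wt]
    have hfeq : (univ.filter (fun i => xa a i ≠ 0))
        = (univ.filter (fun i => ¬ (dot a (g i) = 0))) := by
      apply Finset.filter_congr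
      intro i _
      rw [hcoord a i]
    rw [hfeq]
    rw [add_comm]
    have := Finset.card_filter_add_card_filter_not
      (s := (univ : Finset (Fin (21*s)))) (p := fun i => dot a (g i) = 0)
    rw [Finset.card_univ, Fintype.card_fin] at this
    exact this
  have hZle : ∀ a : V3, a ≠ 0 → Z a ≤ 5*s := by
    intro a ha
    have h1 := hcon (xa a) (hxamem a) (hxane a ha)
    have h2 := hwtZ a
    omega
  -- first double count
  set A0 : Finset V3 := univ.filter (fun a : V3 => a ≠ 0) with hA0def
  have hA0card : A0.card = 63 := by
    rw [hA0def, Finset.filter_ne', Finset.card_erase_of_mem (Finset.mem_univ _),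
      Finset.card_univ, cardV3]
  have swap : ∀ (S : Finset V3), ∑ a ∈ S, Z a
      = ∑ i : Fin (21*s), (S.filter (fun a => dot a (g i) = 0)).card := by
    intro S
    have h1 : ∀ a ∈ S, Z a = ∑ i : Fin (21*s), if dot a (g i) = 0 then 1 else 0 :=
      fun a _ => Finset.card_filter _ _
    rw [Finset.sum_congr rfl h1, Finset.sum_comm]
    exact Finset.sum_congr rfl fun i _ => (Finset.card_filter _ _).symm
  have hA0filter : ∀ y : V3, A0.filter (fun a => dot a y = 0)
      = (univ.filter (fun a : V3 => dot a y = 0)).erase 0 := by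
    intro y
    ext a
    simp only [hA0def, Finset.filter_filter, Finset.mem_filter, Finset.mem_erase,
      Finset.mem_univ, true_and]
  have hc15 : ∀ y : V3, y ≠ 0 → (A0.filter (fun a => dot a y = 0)).card = 15 := by
    intro y hy
    rw [hA0filter y, Finset.card_erase_of_mem (by simp [dot_zero_left]), L1 hy]
  have hcge : ∀ i : Fin (21*s), 15 ≤ (A0.filter (fun a => dot a (g i) = 0)).card := by
    intro i
    by_cases hgi : g i = 0
    · have : A0.filter (fun a => dot a (g i) = 0) = A0 := by
        apply Finset.filter_true_of_mem
        intro a _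
        rw [hgi, dot_zero_right]
      rw [this, hA0card]; omega
    · rw [hc15 _ hgi]
  have hsum_le : ∑ a ∈ A0, Z a ≤ 63 * (5*s) := by
    calc ∑ a ∈ A0, Z a ≤ ∑ a ∈ A0, 5*s :=
          Finset.sum_le_sum (fun a ha => hZle a (by rw [hA0def] at ha; exact (Finset.mem_filter.mp ha).2))
      _ = 63 * (5*s) := by rw [Finset.sum_const, hA0card, smul_eq_mul]
  have hsum_ge : 21*s * 15 ≤ ∑ a ∈ A0, Z a := by
    rw [swap A0]
    calc (21*s) * 15 = ∑ _i : Fin (21*s), 15 := by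
          rw [Finset.sum_const, Finset.card_univ, Fintype.card_fin, smul_eq_mul]
      _ ≤ _ := Finset.sum_le_sum (fun i _ => hcge i)
  have hsum_eq : ∑ a ∈ A0, Z a = 21*s*15 := by omega
  -- forcing
  have hZeq : ∀ a ∈ A0, Z a = 5*s := by
    apply force_eq (fun a ha => hZle a (by rw [hA0def] at ha; exact (Finset.mem_filter.mp ha).2))
    rw [hA0card, hsum_eq]; omega
  have hceq : ∀ i : Fin (21*s), (A0.filter (fun a => dot a (g i) = 0)).card = 15 := by
    have hsum2 : ∑ i : Fin (21*s), (A0.filter (fun a => dot a (g i) = 0)).card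
        ≤ (univ : Finset (Fin (21*s))).card * 15 := by
      rw [← swap A0, Finset.card_univ, Fintype.card_fin, hsum_eq]
    intro i
    exact force_eq' (fun i _ => hcge i) hsum2 i (Finset.mem_univ i)
  have hgz : ∀ i, g i ≠ 0 := by
    intro i hgi
    have h1 : A0.filter (fun a => dot a (g i) = 0) = A0 := by
      apply Finset.filter_true_of_mem
      intro a _
      rw [hgi, dot_zero_right]
    have := hceq i
    rw [h1, hA0card] at this
    omega
  -- second double count, for arbitrary nonzero y
  have hQ : ∀ y : V3, y ≠ 0 →
      (univ.filter (fun i : Fin (21*s) => ∃ c : F4, g i = c • y)).card = s := by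
    intro y hy
    set A1 : Finset V3 := A0.filter (fun a => dot a y = 0) with hA1def
    have hA1card : A1.card = 15 := hc15 y hy
    have hT : ∑ a ∈ A1, Z a = 15 * (5*s) := by
      have : ∀ a ∈ A1, Z a = 5*s := by
        intro a ha
        exact hZeq a (Finset.mem_of_mem_filter a ha)
      rw [Finset.sum_congr rfl this, Finset.sum_const, hA1card, smul_eq_mul]
    rw [swap A1] at hT
    set Q : Finset (Fin (21*s)) := univ.filter (fun i => ∃ c : F4, g i = c • y) with hQdef
    have hdQ : ∀ i ∈ Q, (A1.filter (fun a => dot a (g i) = 0)).card = 15 := by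
      intro i hi
      rw [hQdef, Finset.mem_filter] at hi
      obtain ⟨-, c, hc⟩ := hi
      have h1 : A1.filter (fun a => dot a (g i) = 0) = A1 := by
        apply Finset.filter_true_of_mem
        intro a ha
        rw [hA1def, Finset.mem_filter] at ha
        rw [hc, dot_smul_right, ha.2, mul_zero]
      rw [h1, hA1card]
    have hdnQ : ∀ i ∈ (univ : Finset (Fin (21*s))) \ Q,
        (A1.filter (fun a => dot a (g i) = 0)).card = 3 := by
      intro i hi
      rw [Finset.mem_sdiff, hQdef, Finset.mem_filter] at hi
      have hind : ∀ c : F4, g i ≠ c • y := by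
        intro c hc
        exact hi.2 ⟨Finset.mem_univ i, c, hc⟩
      have h1 : A1.filter (fun a => dot a (g i) = 0)
          = (univ.filter (fun a : V3 => dot a y = 0 ∧ dot a (g i) = 0)).erase 0 := by
        ext a
        rw [Finset.mem_filter, hA1def, Finset.mem_filter, hA0def, Finset.mem_filter,
          Finset.mem_erase, Finset.mem_filter]
        tauto
      rw [h1, Finset.card_erase_of_mem (by simp [dot_zero_left]), L2 hy (hgz i) hind]
    have hTsplit : 15 * Q.card + 3 * (21*s - Q.card) = 15*(5*s) := by
      rw [← hT, ← Finset.sum_sdiff (Finset.subset_univ Q)]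
      rw [Finset.sum_congr rfl hdnQ, Finset.sum_congr rfl hdQ, Finset.sum_const,
        Finset.sum_const, Finset.card_sdiff_of_subset (Finset.subset_univ Q), Finset.card_univ,
        Fintype.card_fin, smul_eq_mul, smul_eq_mul]
      rw [Nat.mul_comm (21*s - Q.card) 3, Nat.mul_comm Q.card 15, Nat.add_comm]
    have hQle : Q.card ≤ 21*s := by
      calc Q.card ≤ (univ : Finset (Fin (21*s))).card :=
            Finset.card_le_card (Finset.subset_univ _)
        _ = 21*s := by rw [Finset.card_univ, Fintype.card_fin]
    show Q.card = s
    omega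
  -- multiplicities in pidx form
  have hMp : ∀ p : P21, (univ.filter (fun i => pidx (g i) = p)).card = s := by
    intro p
    have hfeq : (univ.filter (fun i : Fin (21*s) => pidx (g i) = p))
        = (univ.filter (fun i : Fin (21*s) => ∃ c : F4, g i = c • pt p)) := by
      apply Finset.filter_congr
      intro i _
      constructor
      · intro h
        obtain ⟨hl, hrep⟩ := lead_spec (hgz i)
        rw [h] at hrep
        exact ⟨lead (g i), hrep⟩
      · rintro ⟨c, hc⟩
        have hc0 : c ≠ 0 := by
          rintro rfl
          rw [zero_smul] at hc
          exact hgz i hc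
        rw [hc, pidx_smul_pt hc0]
    rw [hfeq]
    exact hQ (pt p) (pt_ne_zero p)
  -- Gram matrix is zero
  have hgram : ∀ a c : V3, ∑ i, dot a (g i) * (dot c (g i)) ^ 2 = 0 := by
    intro a c
    exact colsum_eq_zero g s hgz hMp (fun v => dot a v * (dot c v) ^ 2)
      (Fdot_inv a c) (Fsum_zero a c)
      (by show dot a 0 * dot c 0 ^ 2 = 0; rw [dot_zero_right, zero_mul])
  -- contradiction with LCD
  set e0 : V3 := Pi.single 0 1 with he0
  have he0ne : e0 ≠ 0 := by
    intro h
    have := congrFun h 0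
    rw [he0] at this
    simp at this
  set x : Fin (21*s) → F4 := xa e0 with hxdef
  have hxC : x ∈ C := hxamem e0
  have hxne : x ≠ 0 := hxane e0 he0ne
  have hdual : inHermDual C x := by
    intro y hy
    set r : V3 := fun j => b.repr ⟨y, hy⟩ j with hrdef
    have hrepr : xa r = y := by
      show ((∑ j, r j • b j : C) : Fin (21*s) → F4) = y
      have h2 : (∑ j, r j • b j : C) = ⟨y, hy⟩ := Module.Basis.sum_repr b ⟨y, hy⟩
      rw [h2]
    rw [hermInner]
    have hterm : ∀ i, x i * (y i) ^ 2 = dot e0 (g i) * (dot r (g i)) ^ 2 := by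
      intro i
      rw [hxdef, hcoord e0 i, ← hrepr, hcoord r i]
    rw [Finset.sum_congr rfl (fun i _ => hterm i)]
    exact hgram e0 r
  exact hxne (hlcd x hxC hdual)

lemma dot_explicit (a : V3) (x y z : F4) :
    dot a ![x, y, z] = a 0 * x + a 1 * y + a 2 * z := by
  rw [dot, Fin.sum_univ_three]
  simp

/-- the matrix-like generator linear map from columns -/
def Phi {N : ℕ} (col : Fin N → V3) : V3 →ₗ[F4] (Fin N → F4) where
  toFun a := fun i => dot a (col i)
  map_add' a b := by
    funext i
    show dot (a + b) (col i) = dot a (col i) + dot b (col i)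
    rw [dot, dot, dot, ← Finset.sum_add_distrib]
    exact Finset.sum_congr rfl fun j _ => by rw [Pi.add_apply, add_mul]
  map_smul' c a := by
    funext i
    show dot (c • a) (col i) = c * dot a (col i)
    rw [dot, dot, Finset.mul_sum]
    exact Finset.sum_congr rfl fun j _ => by rw [Pi.smul_apply, smul_eq_mul, mul_assoc]

@[simp] lemma Phi_apply {N : ℕ} (col : Fin N → V3) (a : V3) (i : Fin N) :
    Phi col a i = dot a (col i) := rfl

/-- P5: each nonzero functional vanishes on exactly 5 points of the transversal. -/
lemma P5 {a : V3} (ha : a ≠ 0) :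
    (univ.filter (fun p : P21 => dot a (pt p) = 0)).card = 5 := by
  set K : Finset V3 := univ.filter (fun v : V3 => v ≠ 0 ∧ dot a v = 0) with hK
  have hKcard : K.card = 15 := by
    have h1 : K = (univ.filter (fun v : V3 => dot v a = 0)).erase 0 := by
      ext v
      simp only [hK, Finset.mem_filter, Finset.mem_erase, Finset.mem_univ, true_and,
        dot_comm a v]
    rw [h1, Finset.card_erase_of_mem (by simp [dot_zero_left]), L1 ha]
  have hpart : K.card = ∑ p : P21, (K.filter (fun v => pidx v = p)).card :=
    Finset.card_eq_sum_card_fiberwise (fun v _ => Finset.mem_univ (pidx v))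
  have hterm : ∀ p : P21, (K.filter (fun v => pidx v = p)).card
      = if dot a (pt p) = 0 then 3 else 0 := by
    intro p
    by_cases hp : dot a (pt p) = 0
    · rw [if_pos hp]
      have h1 : K.filter (fun v => pidx v = p)
          = univ.filter (fun v : V3 => v ≠ 0 ∧ pidx v = p) := by
        ext v
        simp only [hK, Finset.filter_filter, Finset.mem_filter, Finset.mem_univ, true_and]
        constructor
        · rintro ⟨⟨hv0, -⟩, hvp⟩; exact ⟨hv0, hvp⟩
        · rintro ⟨hv0, hvp⟩
          refine ⟨⟨hv0, ?_⟩, hvp⟩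
          obtain ⟨hl, hrep⟩ := lead_spec hv0
          rw [hrep, hvp, dot_smul_right, hp, mul_zero]
      rw [h1]
      exact pidx_fiber_card p
    · rw [if_neg hp]
      rw [Finset.card_eq_zero, Finset.eq_empty_iff_forall_notMem]
      intro v hv
      simp only [hK, Finset.filter_filter, Finset.mem_filter, Finset.mem_univ, true_and] at hv
      obtain ⟨⟨hv0, hvdot⟩, hvp⟩ := hv
      obtain ⟨hl, hrep⟩ := lead_spec hv0
      rw [hrep, hvp, dot_smul_right] at hvdot
      exact hp ((mul_eq_zero.mp hvdot).resolve_left hl)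
  have hsum : ∑ p : P21, (K.filter (fun v => pidx v = p)).card
      = 3 * (univ.filter (fun p : P21 => dot a (pt p) = 0)).card := by
    rw [Finset.sum_congr rfl (fun p _ => hterm p), Finset.card_filter, Finset.mul_sum]
    exact Finset.sum_congr rfl fun p _ => by split <;> simp
  rw [hKcard, hsum] at hpart
  omega

section Construction

variable (s : ℕ) (hs : 1 ≤ s)

def Av : V3 := ![1,0,0]
def Bv : V3 := ![0,1,0]
def idxC : P21 := Sum.inr (Sum.inl 1)
def idxD : P21 := Sum.inr (Sum.inr (0,0))

lemma idxC_ne_idxD : idxC ≠ idxD := by simp [idxC, idxD]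

lemma Av_eq : Av = ![1,0,0] := rfl
lemma Bv_eq : Bv = ![0,1,0] := rfl

def mcol (p : P21) : V3 := if p = idxC then Av else if p = idxD then Bv else pt p

lemma mcol_idxC : mcol idxC = Av := by simp [mcol]
lemma mcol_idxD : mcol idxD = Bv := by simp [mcol, idxC_ne_idxD.symm]
lemma mcol_other {p : P21} (h1 : p ≠ idxC) (h2 : p ≠ idxD) : mcol p = pt p := by
  simp [mcol, h1, h2]

def q0 : Fin s := ⟨0, hs⟩

def col' : P21 × Fin s → V3 := fun pq => if pq.2 = q0 s hs then mcol pq.1 else pt pq.1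

lemma col'_pair (p : P21) (q : Fin s) :
    col' s hs (p, q) = if q = q0 s hs then mcol p else pt p := rfl

def eqv : P21 × Fin s ≃ Fin (21 * s) :=
  Fintype.equivFinOfCardEq (by rw [Fintype.card_prod, cardP21, Fintype.card_fin])

def col : Fin (21 * s) → V3 := fun i => col' s hs ((eqv s).symm i)

end Construction

section Counts

variable (s : ℕ) (hs : 1 ≤ s)

/-- the sum over a finite type split at two distinct points -/
lemma sum_split_two {α M : Type*} [Fintype α] [DecidableEq α] [AddCommMonoid M]
    (f : α → M) (c d : α) (hcd : c ≠ d) :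
    ∑ x : α, f x = f c + f d + ∑ x ∈ (univ.erase c).erase d, f x := by
  have h1 : ∑ x : α, f x = f c + ∑ x ∈ univ.erase c, f x :=
    (Finset.add_sum_erase univ f (Finset.mem_univ c)).symm
  have h2 : ∑ x ∈ univ.erase c, f x = f d + ∑ x ∈ (univ.erase c).erase d, f x :=
    (Finset.add_sum_erase _ f (Finset.mem_erase.mpr ⟨Ne.symm hcd, Finset.mem_univ d⟩)).symm
  rw [h1, h2, add_assoc]

/-- the key indicator relation between modified and unmodified 21-blocks -/
lemma zrel (a : V3) :
    (univ.filter (fun p : P21 => dot a (mcol p) = 0)).card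
      + (if dot a (pt idxC) = 0 then 1 else 0) + (if dot a (pt idxD) = 0 then 1 else 0)
    = (univ.filter (fun p : P21 => dot a (pt p) = 0)).card
      + (if dot a Av = 0 then 1 else 0) + (if dot a Bv = 0 then 1 else 0) := by
  rw [Finset.card_filter, Finset.card_filter]
  rw [sum_split_two (fun p => if dot a (mcol p) = 0 then 1 else 0) idxC idxD idxC_ne_idxD]
  rw [sum_split_two (fun p => if dot a (pt p) = 0 then 1 else 0) idxC idxD idxC_ne_idxD]
  have hR : ∑ p ∈ (univ.erase idxC).erase idxD, (if dot a (mcol p) = 0 then 1 else 0)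
      = ∑ p ∈ (univ.erase idxC).erase idxD, (if dot a (pt p) = 0 then 1 else 0) := by
    refine Finset.sum_congr rfl fun p hp => ?_
    rw [Finset.mem_erase, Finset.mem_erase] at hp
    rw [mcol_other hp.2.1 hp.1]
  rw [hR, mcol_idxC, mcol_idxD]
  omega

lemma ptC_eq : pt idxC = Av + Bv := by
  rw [idxC, pt_inrl, Av, Bv]
  funext j
  fin_cases j <;> simp

lemma dotC (a : V3) : dot a (pt idxC) = dot a Av + dot a Bv := by
  rw [ptC_eq, dot_add_right]

/-- upper bound 6 for the modified block count -/
lemma zmod_le {a : V3} (ha : a ≠ 0) :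
    (univ.filter (fun p : P21 => dot a (mcol p) = 0)).card ≤ 6 := by
  have hrel := zrel a
  rw [P5 ha] at hrel
  by_cases hA : dot a Av = 0 <;> by_cases hB : dot a Bv = 0
  · have hC : dot a (pt idxC) = 0 := by rw [dotC, hA, hB, add_zero]
    rw [if_pos hA, if_pos hB, if_pos hC] at hrel
    omega
  · rw [if_pos hA, if_neg hB] at hrel; omega
  · rw [if_neg hA, if_pos hB] at hrel; omega
  · rw [if_neg hA, if_neg hB] at hrel; omega

/-- the count for the witness vector `e2` is exactly 6 -/
lemma zmod_e2 :
    (univ.filter (fun p : P21 => dot (Pi.single (2 : Fin 3) (1:F4)) (mcol p) = 0)).card = 6 := by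
  have hrel := zrel (Pi.single (2 : Fin 3) (1:F4))
  have he2 : ∀ v : V3, dot (Pi.single (2 : Fin 3) (1:F4)) v = v 2 := fun v => by
    rw [dot_single, one_mul]
  have hA : dot (Pi.single (2 : Fin 3) (1:F4)) Av = 0 := by rw [he2, Av]; simp
  have hB : dot (Pi.single (2 : Fin 3) (1:F4)) Bv = 0 := by rw [he2, Bv]; simp
  have hC : dot (Pi.single (2 : Fin 3) (1:F4)) (pt idxC) = 0 := by rw [dotC, hA, hB, add_zero]
  have hD : dot (Pi.single (2 : Fin 3) (1:F4)) (pt idxD) = 1 := by rw [he2, idxD, pt_inrr]; simp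
  have hne : Pi.single (2 : Fin 3) (1:F4) ≠ (0 : V3) := by
    intro h
    have := congrFun h 2
    simp at this
  rw [P5 hne, if_pos hA, if_pos hB, if_pos hC, if_neg (by rw [hD]; exact one_ne_zero)] at hrel
  omega

/-- the zero-count of a codeword over all `21*s` coordinates -/
lemma Zcount (a : V3) :
    (univ.filter (fun i : Fin (21*s) => dot a (col s hs i) = 0)).card
    = (univ.filter (fun p : P21 => dot a (mcol p) = 0)).card
      + (s - 1) * (univ.filter (fun p : P21 => dot a (pt p) = 0)).card := by
  -- transport along the equivalence
  have htrans : (univ.filter (fun i : Fin (21*s) => dot a (col s hs i) = 0)).card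
      = (univ.filter (fun pq : P21 × Fin s => dot a (col' s hs pq) = 0)).card := by
    apply Finset.card_nbij' (fun i => (eqv s).symm i) (fun pq => eqv s pq)
    · intro i hi
      rw [Finset.mem_coe, Finset.mem_filter] at hi
      rw [Finset.mem_coe, Finset.mem_filter]
      exact ⟨Finset.mem_univ _, hi.2⟩
    · intro pq hpq
      rw [Finset.mem_coe, Finset.mem_filter] at hpq
      rw [Finset.mem_coe, Finset.mem_filter]
      refine ⟨Finset.mem_univ _, ?_⟩
      show dot a (col' s hs ((eqv s).symm (eqv s pq))) = 0
      rw [Equiv.symm_apply_apply]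
      exact hpq.2
    · intro i _; exact Equiv.apply_symm_apply _ _
    · intro pq _; exact Equiv.symm_apply_apply _ _
  rw [htrans, Finset.card_filter, Fintype.sum_prod_type_right]
  have hq : ∀ q : Fin s, ∑ p : P21, (if dot a (col' s hs (p, q)) = 0 then 1 else 0)
      = if q = q0 s hs then (univ.filter (fun p : P21 => dot a (mcol p) = 0)).card
        else (univ.filter (fun p : P21 => dot a (pt p) = 0)).card := by
    intro q
    by_cases hq0 : q = q0 s hs
    · rw [if_pos hq0, Finset.card_filter]
      refine Finset.sum_congr rfl fun p _ => ?_
      rw [col'_pair s hs p q, if_pos hq0]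
    · rw [if_neg hq0, Finset.card_filter]
      refine Finset.sum_congr rfl fun p _ => ?_
      rw [col'_pair s hs p q, if_neg hq0]
  rw [Finset.sum_congr rfl (fun q _ => hq q)]
  rw [← Finset.add_sum_erase univ _ (Finset.mem_univ (q0 s hs)), if_pos rfl]
  congr 1
  have hconst : ∀ q ∈ univ.erase (q0 s hs),
      (if q = q0 s hs then (univ.filter (fun p : P21 => dot a (mcol p) = 0)).card
        else (univ.filter (fun p : P21 => dot a (pt p) = 0)).card)
      = (univ.filter (fun p : P21 => dot a (pt p) = 0)).card := by
    intro q hq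
    rw [if_neg (Finset.mem_erase.mp hq).1]
  rw [Finset.sum_congr rfl hconst, Finset.sum_const,
    Finset.card_erase_of_mem (Finset.mem_univ _), Finset.card_univ, Fintype.card_fin,
    smul_eq_mul]

end Counts

section Assemble

variable (s : ℕ) (hs : 1 ≤ s)

lemma sum_nonzero_eq (F : V3 → F4) (hF0 : F 0 = 0) :
    ∑ v ∈ univ.filter (fun v : V3 => v ≠ 0), F v = ∑ v : V3, F v := by
  have hsplit := Finset.sum_filter_add_sum_filter_not (univ : Finset V3) (fun v => v ≠ 0) F
  have hz : ∑ v ∈ univ.filter (fun v : V3 => ¬ v ≠ 0), F v = 0 := by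
    have h1 : univ.filter (fun v : V3 => ¬ v ≠ 0) = {0} := by ext v; simp
    rw [h1, Finset.sum_singleton, hF0]
  rw [← hsplit, hz, add_zero]

lemma ptFsum (a b : V3) : ∑ p : P21, dot a (pt p) * (dot b (pt p)) ^ 2 = 0 := by
  calc ∑ p : P21, dot a (pt p) * (dot b (pt p)) ^ 2
      = ∑ v ∈ univ.filter (fun v : V3 => v ≠ 0), dot a v * (dot b v) ^ 2 :=
        ptsum (fun v => dot a v * (dot b v) ^ 2) (Fdot_inv a b)
    _ = ∑ v : V3, dot a v * (dot b v) ^ 2 :=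
        sum_nonzero_eq _ (by show dot a 0 * (dot b 0) ^ 2 = 0; rw [dot_zero_right, zero_mul])
    _ = 0 := Fsum_zero a b

lemma gram (a b : V3) : ∑ i, dot a (col s hs i) * (dot b (col s hs i)) ^ 2
    = a 0 * (b 1) ^ 2 + a 1 * (b 0) ^ 2 + a 2 * (b 2) ^ 2 := by
  have htrans : ∑ i, dot a (col s hs i) * (dot b (col s hs i)) ^ 2
      = ∑ pq : P21 × Fin s, dot a (col' s hs pq) * (dot b (col' s hs pq)) ^ 2 := by
    refine (Fintype.sum_equiv (eqv s) _ _ fun pq => ?_).symm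
    rw [show col s hs (eqv s pq) = col' s hs pq from by rw [col, Equiv.symm_apply_apply]]
  rw [htrans, Fintype.sum_prod_type_right]
  have hq : ∀ q : Fin s, ∑ p : P21, dot a (col' s hs (p, q)) * (dot b (col' s hs (p, q))) ^ 2
      = if q = q0 s hs then ∑ p : P21, dot a (mcol p) * (dot b (mcol p)) ^ 2 else 0 := by
    intro q
    by_cases hq0 : q = q0 s hs
    · rw [if_pos hq0]
      exact Finset.sum_congr rfl fun p _ => by rw [col'_pair s hs p q, if_pos hq0]
    · rw [if_neg hq0]
      rw [show ∑ p : P21, dot a (col' s hs (p, q)) * (dot b (col' s hs (p, q))) ^ 2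
          = ∑ p : P21, dot a (pt p) * (dot b (pt p)) ^ 2 from
        Finset.sum_congr rfl fun p _ => by rw [col'_pair s hs p q, if_neg hq0]]
      exact ptFsum a b
  rw [Finset.sum_congr rfl (fun q _ => hq q), Finset.sum_ite_eq' univ (q0 s hs) _,
    if_pos (Finset.mem_univ _)]
  rw [sum_split_two (fun p => dot a (mcol p) * (dot b (mcol p)) ^ 2) idxC idxD idxC_ne_idxD]
  have hpt0 := ptFsum a b
  rw [sum_split_two (fun p => dot a (pt p) * (dot b (pt p)) ^ 2) idxC idxD idxC_ne_idxD]
    at hpt0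
  have hR : ∑ p ∈ (univ.erase idxC).erase idxD, dot a (mcol p) * (dot b (mcol p)) ^ 2
      = ∑ p ∈ (univ.erase idxC).erase idxD, dot a (pt p) * (dot b (pt p)) ^ 2 :=
    Finset.sum_congr rfl fun p hp => by
      rw [mcol_other (Finset.mem_erase.mp (Finset.mem_erase.mp hp).2).1
        (Finset.mem_erase.mp hp).1]
  rw [mcol_idxC, mcol_idxD, hR]
  have hR' : ∑ p ∈ (univ.erase idxC).erase idxD, dot a (pt p) * (dot b (pt p)) ^ 2
      = -(dot a (pt idxC) * (dot b (pt idxC)) ^ 2 + dot a (pt idxD) * (dot b (pt idxD)) ^ 2) := by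
    linear_combination hpt0
  rw [hR']
  have hptC : pt idxC = ![1,1,0] := by rw [idxC, pt_inrl]
  have hptD : pt idxD = ![0,0,1] := by rw [idxD, pt_inrr]
  rw [hptC, hptD, Av_eq, Bv_eq]
  simp only [dot_explicit]
  linear_combination (-(a 1 * (b 0) ^ 2 + a 0 * (b 1) ^ 2 + (a 0 + a 1) * (b 0 * b 1)
    + a 2 * (b 2) ^ 2)) * two_zero

lemma Phi_inj : Function.Injective (Phi (col s hs)) := by
  apply LinearMap.ker_eq_bot.mp
  apply LinearMap.ker_eq_bot'.mpr
  intro a ha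
  have hval : ∀ p : P21, dot a (col' s hs (p, q0 s hs)) = 0 := by
    intro p
    have := congrFun ha (eqv s (p, q0 s hs))
    rw [show (0 : Fin (21*s) → F4) (eqv s (p, q0 s hs)) = 0 from rfl] at this
    rw [Phi_apply] at this
    rw [show col s hs (eqv s (p, q0 s hs)) = col' s hs (p, q0 s hs) from
      by rw [col, Equiv.symm_apply_apply]] at this
    exact this
  have hmc : ∀ p : P21, dot a (mcol p) = 0 := by
    intro p
    have := hval p
    rw [col'_pair s hs p _, if_pos rfl] at this
    exact this
  have h0 : a 0 = 0 := by
    have := hmc (Sum.inl ())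
    rw [mcol_other (by simp [idxC]) (by simp [idxD]), pt_inl, dot_explicit] at this
    simpa using this
  have h1 : a 1 = 0 := by
    have := hmc (Sum.inr (Sum.inl 0))
    rw [mcol_other (by simp [idxC]) (by simp [idxD]), pt_inrl, dot_explicit] at this
    simpa using this
  have h2 : a 2 = 0 := by
    have := hmc (Sum.inr (Sum.inr (1, 0)))
    rw [mcol_other (by simp [idxC]) (by simp [idxD]), pt_inrr, dot_explicit] at this
    rw [h0] at this
    simpa using this
  funext j
  fin_cases j <;> assumption

lemma rank3 : Module.finrank F4 (LinearMap.range (Phi (col s hs))) = 3 := by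
  rw [LinearMap.finrank_range_of_inj (Phi_inj s hs), Module.finrank_pi, Fintype.card_fin]

lemma lcd : IsHermLCD (LinearMap.range (Phi (col s hs))) := by
  intro x hx hdual
  obtain ⟨a, rfl⟩ := LinearMap.mem_range.mp hx
  have hzero : ∀ b : V3, a 0 * (b 1) ^ 2 + a 1 * (b 0) ^ 2 + a 2 * (b 2) ^ 2 = 0 := by
    intro b
    have hb := hdual (Phi (col s hs) b) (LinearMap.mem_range.mpr ⟨b, rfl⟩)
    rw [hermInner] at hb
    rw [← gram s hs a b, ← hb]
    exact Finset.sum_congr rfl fun i _ => rfl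
  have h0 : a 0 = 0 := by
    have := hzero (Pi.single 1 1)
    simpa [Pi.single_apply] using this
  have h1 : a 1 = 0 := by
    have := hzero (Pi.single 0 1)
    simpa [Pi.single_apply] using this
  have h2 : a 2 = 0 := by
    have := hzero (Pi.single 2 1)
    simpa [Pi.single_apply] using this
  have ha : a = 0 := by
    funext j
    fin_cases j <;> assumption
  rw [ha, map_zero]

lemma wtZ (a : V3) : wt (Phi (col s hs) a)
    + (univ.filter (fun i : Fin (21*s) => dot a (col s hs i) = 0)).card = 21*s := by
  rw [wt]
  have hfeq : (univ.filter (fun i => Phi (col s hs) a i ≠ 0))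
      = (univ.filter (fun i : Fin (21*s) => ¬ (dot a (col s hs i) = 0))) := by
    apply Finset.filter_congr
    intro i _
    rw [Phi_apply]
  rw [hfeq, add_comm]
  have := Finset.card_filter_add_card_filter_not
    (s := (univ : Finset (Fin (21*s)))) (p := fun i => dot a (col s hs i) = 0)
  rw [Finset.card_univ, Fintype.card_fin] at this
  exact this

lemma minwt : minWtIs (LinearMap.range (Phi (col s hs))) (16*s - 1) := by
  have hne2 : Pi.single (2 : Fin 3) (1:F4) ≠ (0 : V3) := by
    intro h
    have := congrFun h 2
    simp at this
  constructor
  · refine ⟨Phi (col s hs) (Pi.single (2 : Fin 3) (1:F4)),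
      LinearMap.mem_range.mpr ⟨_, rfl⟩, ?_, ?_⟩
    · intro h
      exact hne2 (Phi_inj s hs (by rw [h, map_zero]))
    · have hz := Zcount s hs (Pi.single (2 : Fin 3) (1:F4))
      rw [zmod_e2, P5 hne2] at hz
      have hw := wtZ s hs (Pi.single (2 : Fin 3) (1:F4))
      rw [hz] at hw
      omega
  · intro x hx hxne
    obtain ⟨a, rfl⟩ := LinearMap.mem_range.mp hx
    have ha : a ≠ 0 := by
      rintro rfl
      rw [map_zero] at hxne
      exact hxne rfl
    have hz := Zcount s hs a
    rw [P5 ha] at hz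
    have hle := zmod_le ha
    have hw := wtZ s hs a
    rw [hz] at hw
    omega

lemma existence (s : ℕ) (hs : 1 ≤ s) :
    ∃ C : Submodule F4 (Fin (21*s) → F4), IsHermLCDCode (21*s) 3 (16*s - 1) C :=
  ⟨LinearMap.range (Phi (col s hs)), rank3 s hs, lcd s hs, minwt s hs⟩

end Assemble



end S16

end

/-- `d₄(21s, 3) = 16s - 1` for every positive integer `s`. -/
theorem stmt16 (s : ℕ) (hs : 1 ≤ s) : d4Is (21 * s) 3 (16 * s - 1) := by
  constructor
  · exact S16.existence s hs
  · intro C hC hlcd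
    exact S16.converse s hs C hC hlcd
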